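/- Fix an integer D ≥ 2 and define, for σ > 0, g(σ) = (D−1)·2^{1/D}·(1+σ)^{(D−2)/D}·(1+σ²)^{1/D}·(1 + 1/σ) + 2^{(D+1)/D}·(1+σ)^{2(D−1)/D}·(1+σ²)^{−(D−1)/D}. Then (i) g(σ) = g(1/σ) for all σ > 0, and (ii) g has a unique global minimum at σ = 1, i.e. g(σ) > g(1) for all σ > 0 with σ ≠ 1. -/

import Mathlib

private lemma loginj {x y : ℝ} (hx : 0 < x) (hy : 0 < y)
    (h : Real.log x = Real.log y) : x = y := by
  rw [← Real.exp_log hx, h, Real.exp_log hy]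

set_option maxHeartbeats 1600000 in
/-- For `D ≥ 2` and `σ > 0`, the sharpness
`g(σ) = (D−1)·2^{1/D}·(1+σ)^{(D−2)/D}·(1+σ²)^{1/D}·(1 + 1/σ)
      + 2^{(D+1)/D}·(1+σ)^{2(D−1)/D}·(1+σ²)^{−(D−1)/D}`
satisfies (i) `g(σ) = g(1/σ)` and (ii) `g` has a unique global minimum at `σ = 1`:
`g(1) < g(σ)` for all `σ > 0` with `σ ≠ 1`. -/
theorem sharpness_sigma_symmetric_min (D : ℕ) (hD : 2 ≤ D) :
    let g : ℝ → ℝ := fun σ =>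
      ((D : ℝ) - 1) * (2 : ℝ) ^ ((1 : ℝ) / D) * (1 + σ) ^ (((D : ℝ) - 2) / D)
          * (1 + σ ^ 2) ^ ((1 : ℝ) / D) * (1 + 1 / σ)
        + (2 : ℝ) ^ (((D : ℝ) + 1) / D) * (1 + σ) ^ (2 * ((D : ℝ) - 1) / D)
          * (1 + σ ^ 2) ^ (-((D : ℝ) - 1) / D)
    (∀ σ : ℝ, 0 < σ → g σ = g (1 / σ)) ∧
      (∀ σ : ℝ, 0 < σ → σ ≠ 1 → g 1 < g σ) := by
  intro g
  have hd : (2:ℝ) ≤ (D:ℝ) := by exact_mod_cast hD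
  have hd0 : (D:ℝ) ≠ 0 := by linarith
  have hdpos : (0:ℝ) < (D:ℝ) := by linarith
  have hd1 : (0:ℝ) < (D:ℝ) - 1 := by linarith
  have h2 : (0:ℝ) < 2 := by norm_num
  constructor
  · -- symmetry
    intro σ hσ
    have hu : (0:ℝ) < 1 + σ := by linarith
    have hv : (0:ℝ) < 1 + σ^2 := by positivity
    have hσ2 : (σ:ℝ)^2 ≠ 0 := by positivity
    have hq1 : (0:ℝ) < (1+σ)/σ := by positivity
    have hq2 : (0:ℝ) < (1+σ^2)/σ^2 := by positivity
    have r1 : ∀ y : ℝ, (2:ℝ)^y ≠ 0 := fun y => (Real.rpow_pos_of_pos h2 y).ne'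
    have r2 : ∀ y : ℝ, (1+σ)^y ≠ 0 := fun y => (Real.rpow_pos_of_pos hu y).ne'
    have r3 : ∀ y : ℝ, (1+σ^2)^y ≠ 0 := fun y => (Real.rpow_pos_of_pos hv y).ne'
    have r4 : ∀ y : ℝ, ((1+σ)/σ)^y ≠ 0 := fun y => (Real.rpow_pos_of_pos hq1 y).ne'
    have r5 : ∀ y : ℝ, ((1+σ^2)/σ^2)^y ≠ 0 := fun y => (Real.rpow_pos_of_pos hq2 y).ne'
    have a1 : 1 + 1/σ = (1+σ)/σ := by field_simp; ring
    have a2 : 1 + (1/σ)^2 = (1+σ^2)/σ^2 := by field_simp; ring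
    simp only [g]
    rw [a1, a2, one_div_one_div]
    congr 1
    · apply loginj (by positivity) (by positivity)
      simp only [Real.log_mul, Real.log_div, Real.log_rpow, Real.log_pow, mul_ne_zero_iff,
        div_ne_zero_iff, ne_eq, hu, hv, hσ, hd1, h2, hq1, hq2, hu.ne', hv.ne', hσ.ne',
        hd1.ne', h2.ne', hσ2, r1, r2, r3, r4, r5, pow_ne_zero_iff, not_false_iff, and_true,
        true_and, and_self, Nat.cast_ofNat]
      field_simp
      ring
    · apply loginj (by positivity) (by positivity)
      simp only [Real.log_mul, Real.log_div, Real.log_rpow, Real.log_pow, mul_ne_zero_iff,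
        div_ne_zero_iff, ne_eq, hu, hv, hσ, hd1, h2, hq1, hq2, hu.ne', hv.ne', hσ.ne',
        hd1.ne', h2.ne', hσ2, r1, r2, r3, r4, r5, pow_ne_zero_iff, not_false_iff, and_true,
        true_and, and_self, Nat.cast_ofNat]
      field_simp
      ring
  · -- strict minimum at 1
    intro σ hσ hσ1
    have hu : (0:ℝ) < 1 + σ := by linarith
    have hv : (0:ℝ) < 1 + σ^2 := by positivity
    have hσ2 : (σ:ℝ)^2 ≠ 0 := by positivity
    have hq3 : (0:ℝ) < (1+σ)^2/σ := by positivity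
    have hup : ((1:ℝ)+σ)^2 ≠ 0 := by positivity
    have r1 : ∀ y : ℝ, (2:ℝ)^y ≠ 0 := fun y => (Real.rpow_pos_of_pos h2 y).ne'
    have r2 : ∀ y : ℝ, (1+σ)^y ≠ 0 := fun y => (Real.rpow_pos_of_pos hu y).ne'
    have r3 : ∀ y : ℝ, (1+σ^2)^y ≠ 0 := fun y => (Real.rpow_pos_of_pos hv y).ne'
    have r6 : ∀ y : ℝ, ((1+σ)^2/σ)^y ≠ 0 := fun y => (Real.rpow_pos_of_pos hq3 y).ne'
    have r7 : ∀ y : ℝ, (σ:ℝ)^y ≠ 0 := fun y => (Real.rpow_pos_of_pos hσ y).ne'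
    have a1 : 1 + 1/σ = (1+σ)/σ := by field_simp; ring
    -- g 1 = 4 D
    have e4 : (2:ℝ)^(2:ℝ) = 4 := by
      calc (2:ℝ)^(2:ℝ) = (2:ℝ)^((2:ℕ):ℝ) := by norm_num
        _ = (2:ℝ)^(2:ℕ) := Real.rpow_natCast 2 2
        _ = 4 := by norm_num
    have A1 : (2:ℝ)^((1:ℝ)/(D:ℝ)) * 2^(((D:ℝ)-2)/(D:ℝ)) * 2^((1:ℝ)/(D:ℝ)) = 2 := by
      rw [← Real.rpow_add h2, ← Real.rpow_add h2,
        show (1:ℝ)/(D:ℝ) + ((D:ℝ)-2)/(D:ℝ) + 1/(D:ℝ) = 1 by field_simp; ring, Real.rpow_one]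
    have A2 : (2:ℝ)^(((D:ℝ)+1)/(D:ℝ)) * 2^(2*((D:ℝ)-1)/(D:ℝ)) * 2^(-((D:ℝ)-1)/(D:ℝ)) = 4 := by
      rw [← Real.rpow_add h2, ← Real.rpow_add h2,
        show ((D:ℝ)+1)/(D:ℝ) + 2*((D:ℝ)-1)/(D:ℝ) + -((D:ℝ)-1)/(D:ℝ) = 2 by field_simp; ring, e4]
    have hg1 : g 1 = 4 * (D:ℝ) := by
      simp only [g]
      rw [show (1:ℝ) + 1 = 2 by norm_num, show (1:ℝ) + (1:ℝ)^2 = 2 by norm_num,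
        show 1 + 1/(1:ℝ) = 2 by norm_num]
      linear_combination (2*((D:ℝ)-1)) * A1 + A2
    -- canonical form of g σ
    have hA : (0:ℝ) < (2:ℝ)^((1:ℝ)/(D:ℝ)) * (1+σ)^(2*((D:ℝ)-1)/(D:ℝ))
        * (1+σ^2)^((1:ℝ)/(D:ℝ)) * σ^(-1:ℝ) := by positivity
    have hB : (0:ℝ) < (2:ℝ)^(((D:ℝ)+1)/(D:ℝ)) * (1+σ)^(2*((D:ℝ)-1)/(D:ℝ))
        * (1+σ^2)^(-((D:ℝ)-1)/(D:ℝ)) := by positivity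
    have rA : ∀ y : ℝ, ((2:ℝ)^((1:ℝ)/(D:ℝ)) * (1+σ)^(2*((D:ℝ)-1)/(D:ℝ))
        * (1+σ^2)^((1:ℝ)/(D:ℝ)) * σ^(-1:ℝ))^y ≠ 0 :=
      fun y => (Real.rpow_pos_of_pos hA y).ne'
    have rB : ∀ y : ℝ, ((2:ℝ)^(((D:ℝ)+1)/(D:ℝ)) * (1+σ)^(2*((D:ℝ)-1)/(D:ℝ))
        * (1+σ^2)^(-((D:ℝ)-1)/(D:ℝ)))^y ≠ 0 :=
      fun y => (Real.rpow_pos_of_pos hB y).ne'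
    have hT1 : ((D:ℝ)-1) * (2:ℝ)^((1:ℝ)/(D:ℝ)) * (1+σ)^(((D:ℝ)-2)/(D:ℝ))
        * (1+σ^2)^((1:ℝ)/(D:ℝ)) * (1+1/σ)
        = ((D:ℝ)-1) * ((2:ℝ)^((1:ℝ)/(D:ℝ)) * (1+σ)^(2*((D:ℝ)-1)/(D:ℝ))
          * (1+σ^2)^((1:ℝ)/(D:ℝ)) * σ^(-1:ℝ)) := by
      rw [a1]
      apply loginj (by positivity) (by positivity)
      simp only [Real.log_mul, Real.log_div, Real.log_rpow, Real.log_pow, mul_ne_zero_iff,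
        div_ne_zero_iff, ne_eq, hu, hv, hσ, hd1, h2, hu.ne', hv.ne', hσ.ne', hd1.ne', h2.ne',
        hσ2, r1, r2, r3, r7, pow_ne_zero_iff, not_false_iff, and_true, true_and, and_self,
        Nat.cast_ofNat]
      field_simp
      ring
    have ham := Real.geom_mean_le_arith_mean2_weighted
      (le_of_lt (div_pos hd1 hdpos)) (by positivity : (0:ℝ) ≤ 1/(D:ℝ)) hA.le hB.le
      (by field_simp; ring : ((D:ℝ)-1)/(D:ℝ) + 1/(D:ℝ) = 1)
    have hprod : ((2:ℝ)^((1:ℝ)/(D:ℝ)) * (1+σ)^(2*((D:ℝ)-1)/(D:ℝ))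
          * (1+σ^2)^((1:ℝ)/(D:ℝ)) * σ^(-1:ℝ)) ^ (((D:ℝ)-1)/(D:ℝ))
        * ((2:ℝ)^(((D:ℝ)+1)/(D:ℝ)) * (1+σ)^(2*((D:ℝ)-1)/(D:ℝ))
          * (1+σ^2)^(-((D:ℝ)-1)/(D:ℝ))) ^ ((1:ℝ)/(D:ℝ))
        = (2:ℝ)^((2:ℝ)/(D:ℝ)) * ((1+σ)^2/σ)^(((D:ℝ)-1)/(D:ℝ)) := by
      apply loginj (by positivity) (by positivity)
      simp only [Real.log_mul, Real.log_div, Real.log_rpow, Real.log_pow, mul_ne_zero_iff,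
        div_ne_zero_iff, ne_eq, hu, hv, hσ, hd1, h2, hA, hB, hq3, hu.ne', hv.ne', hσ.ne',
        hd1.ne', h2.ne', hσ2, hup, r1, r2, r3, r6, r7, rA, rB, pow_ne_zero_iff, not_false_iff,
        and_true, true_and, and_self, Nat.cast_ofNat]
      field_simp
      ring
    have h4 : (4:ℝ) < (1+σ)^2/σ := by
      rw [lt_div_iff₀ hσ]
      have h0 : (1:ℝ) - σ ≠ 0 := sub_ne_zero.mpr fun h => hσ1 h.symm
      have hsq : 0 < ((1:ℝ)-σ)^2 := lt_of_le_of_ne (sq_nonneg _) (Ne.symm (pow_ne_zero 2 h0))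
      nlinarith [hsq]
    have hmono : (4:ℝ)^(((D:ℝ)-1)/(D:ℝ)) < ((1+σ)^2/σ)^(((D:ℝ)-1)/(D:ℝ)) :=
      Real.rpow_lt_rpow (by norm_num) h4 (div_pos hd1 hdpos)
    have hc4 : (2:ℝ)^((2:ℝ)/(D:ℝ)) * (4:ℝ)^(((D:ℝ)-1)/(D:ℝ)) = 4 := by
      rw [show (4:ℝ) = 2^(2:ℝ) from e4.symm, ← Real.rpow_mul h2.le, ← Real.rpow_add h2,
        show (2:ℝ)/(D:ℝ) + 2*(((D:ℝ)-1)/(D:ℝ)) = 2 by field_simp; ring, e4]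
    have hgσ : g σ = ((D:ℝ)-1) * ((2:ℝ)^((1:ℝ)/(D:ℝ)) * (1+σ)^(2*((D:ℝ)-1)/(D:ℝ))
          * (1+σ^2)^((1:ℝ)/(D:ℝ)) * σ^(-1:ℝ))
        + ((2:ℝ)^(((D:ℝ)+1)/(D:ℝ)) * (1+σ)^(2*((D:ℝ)-1)/(D:ℝ))
          * (1+σ^2)^(-((D:ℝ)-1)/(D:ℝ))) := by
      simp only [g]
      rw [hT1]
    rw [hg1, hgσ]
    have hABle : (D:ℝ) * ((2:ℝ)^((2:ℝ)/(D:ℝ)) * ((1+σ)^2/σ)^(((D:ℝ)-1)/(D:ℝ)))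
        ≤ ((D:ℝ)-1) * ((2:ℝ)^((1:ℝ)/(D:ℝ)) * (1+σ)^(2*((D:ℝ)-1)/(D:ℝ))
          * (1+σ^2)^((1:ℝ)/(D:ℝ)) * σ^(-1:ℝ))
        + ((2:ℝ)^(((D:ℝ)+1)/(D:ℝ)) * (1+σ)^(2*((D:ℝ)-1)/(D:ℝ))
          * (1+σ^2)^(-((D:ℝ)-1)/(D:ℝ))) := by
      have h := mul_le_mul_of_nonneg_left ham hdpos.le
      rw [hprod] at h
      have heq : (D:ℝ) * (((D:ℝ)-1)/(D:ℝ) * ((2:ℝ)^((1:ℝ)/(D:ℝ)) * (1+σ)^(2*((D:ℝ)-1)/(D:ℝ))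
            * (1+σ^2)^((1:ℝ)/(D:ℝ)) * σ^(-1:ℝ))
          + 1/(D:ℝ) * ((2:ℝ)^(((D:ℝ)+1)/(D:ℝ)) * (1+σ)^(2*((D:ℝ)-1)/(D:ℝ))
            * (1+σ^2)^(-((D:ℝ)-1)/(D:ℝ))))
          = ((D:ℝ)-1) * ((2:ℝ)^((1:ℝ)/(D:ℝ)) * (1+σ)^(2*((D:ℝ)-1)/(D:ℝ))
            * (1+σ^2)^((1:ℝ)/(D:ℝ)) * σ^(-1:ℝ))
          + ((2:ℝ)^(((D:ℝ)+1)/(D:ℝ)) * (1+σ)^(2*((D:ℝ)-1)/(D:ℝ))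
            * (1+σ^2)^(-((D:ℝ)-1)/(D:ℝ))) := by
        have c1 : (D:ℝ) * (((D:ℝ)-1)/(D:ℝ)) = (D:ℝ)-1 := by field_simp
        have c2 : (D:ℝ) * (1/(D:ℝ)) = 1 := by field_simp
        linear_combination ((2:ℝ)^((1:ℝ)/(D:ℝ)) * (1+σ)^(2*((D:ℝ)-1)/(D:ℝ))
            * (1+σ^2)^((1:ℝ)/(D:ℝ)) * σ^(-1:ℝ)) * c1
          + ((2:ℝ)^(((D:ℝ)+1)/(D:ℝ)) * (1+σ)^(2*((D:ℝ)-1)/(D:ℝ))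
            * (1+σ^2)^(-((D:ℝ)-1)/(D:ℝ))) * c2
      linarith
    have step3 : 4 * (D:ℝ)
        < (D:ℝ) * ((2:ℝ)^((2:ℝ)/(D:ℝ)) * ((1+σ)^2/σ)^(((D:ℝ)-1)/(D:ℝ))) := by
      have h5 : (D:ℝ) * ((2:ℝ)^((2:ℝ)/(D:ℝ)) * (4:ℝ)^(((D:ℝ)-1)/(D:ℝ)))
          < (D:ℝ) * ((2:ℝ)^((2:ℝ)/(D:ℝ)) * ((1+σ)^2/σ)^(((D:ℝ)-1)/(D:ℝ))) := by
        apply mul_lt_mul_of_pos_left _ hdpos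
        exact mul_lt_mul_of_pos_left hmono (Real.rpow_pos_of_pos h2 _)
      rw [hc4] at h5
      linarith
    linarith
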